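/- Let G be the '3-path', the undirected social network on the four nodes {a, a', b', b} with zero self-weights and unit-weight edges {a, a'}, {a', b'}, {b', b}. Then the maximum revenue of G equals 3/4, and it is attained only when exactly one of the endpoint nodes a, b has pricing probability 1/2 and the other has pricing probability 1. -/

import Mathlib

open Finset

/-- The revenue of a marketing strategy `(π, p)` on an undirected social network with
weights `w`. -/
noncomputable def revenue {V : Type*} [Fintype V] [DecidableEq V]
    (w : V → V → ℝ) (π : V ≃ Fin (Fintype.card V)) (p : V → ℝ) : ℝ :=
  ∑ i, p i * (1 - p i) *
    (w i i + ∑ j ∈ univ.filter (fun j => π j < π i), p j * w j i)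

/-- The '3-path': nodes `a = 0`, `a' = 1`, `b' = 2`, `b = 3`, with zero self-weights
and unit-weight edges `{a, a'}, {a', b'}, {b', b}`. -/
noncomputable def threePath : Fin 4 → Fin 4 → ℝ := fun i j =>
  if (i, j) ∈ ({(0, 1), (1, 0), (1, 2), (2, 1), (2, 3), (3, 2)} :
      Finset (Fin 4 × Fin 4))
  then 1 else 0

/-- The revenue on the 3-path decomposes as a sum over the three edges, where each
edge contributes `p_l * (1 - p_l) * p_e` with `l` the later and `e` the earlier node. -/
lemma rev_eq (π : Fin 4 ≃ Fin (Fintype.card (Fin 4))) (p : Fin 4 → ℝ) :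
    revenue threePath π p =
      (if π 0 < π 1 then p 1 * (1 - p 1) * p 0 else p 0 * (1 - p 0) * p 1)
      + (if π 1 < π 2 then p 2 * (1 - p 2) * p 1 else p 1 * (1 - p 1) * p 2)
      + (if π 2 < π 3 then p 3 * (1 - p 3) * p 2 else p 2 * (1 - p 2) * p 3) := by
  have h01 : π 0 < π 1 ∨ π 1 < π 0 := (π.injective.ne (by decide : (0:Fin 4) ≠ 1)).lt_or_gt
  have h12 : π 1 < π 2 ∨ π 2 < π 1 := (π.injective.ne (by decide : (1:Fin 4) ≠ 2)).lt_or_gt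
  have h23 : π 2 < π 3 ∨ π 3 < π 2 := (π.injective.ne (by decide : (2:Fin 4) ≠ 3)).lt_or_gt
  simp only [revenue, sum_filter, Fin.sum_univ_four]
  rcases h01 with h1 | h1 <;> rcases h12 with h2 | h2 <;> rcases h23 with h3 | h3 <;>
    simp [threePath, Prod.ext_iff, h1, h2, h3, h1.asymm, h2.asymm, h3.asymm,
      h1.not_gt, h2.not_gt, h3.not_gt, lt_irrefl] <;> ring

/-- Each edge contributes at most `1/4`. -/
lemma edgeA {x y : ℝ} (hx : 1/2 ≤ x) (hx1 : x ≤ 1) (hy : 1/2 ≤ y) (hy1 : y ≤ 1) :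
    y * (1 - y) * x ≤ 1/4 := by
  nlinarith [sq_nonneg (2*y - 1),
    mul_nonneg (mul_nonneg (by linarith : (0:ℝ) ≤ y) (by linarith : (0:ℝ) ≤ 1 - y))
      (by linarith : (0:ℝ) ≤ 1 - x)]

/-- An edge contributes exactly `1/4` only if the later node has probability `1/2`
and the earlier node has probability `1`. -/
lemma edgeB {x y : ℝ} (hx : 1/2 ≤ x) (hx1 : x ≤ 1) (hy : 1/2 ≤ y) (hy1 : y ≤ 1)
    (h : y * (1 - y) * x = 1/4) : y = 1/2 ∧ x = 1 := by
  constructor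
  · nlinarith [sq_nonneg (2*y - 1),
      mul_nonneg (sq_nonneg (2*y - 1)) (by linarith : (0:ℝ) ≤ x - 1/2)]
  · nlinarith [mul_nonneg (sq_nonneg (2*y - 1)) (by linarith : (0:ℝ) ≤ x)]

/-- The maximum revenue of the 3-path equals `3/4`, and it is attained only when
exactly one of the endpoint nodes `a, b` has pricing probability `1/2` and the other
has pricing probability `1`. -/
theorem threePath_maxRev :
    IsGreatest {r | ∃ (π : Fin 4 ≃ Fin (Fintype.card (Fin 4))) (p : Fin 4 → ℝ),
        (∀ i, 1/2 ≤ p i ∧ p i ≤ 1) ∧ r = revenue threePath π p} (3/4) ∧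
      ∀ (π : Fin 4 ≃ Fin (Fintype.card (Fin 4))) (p : Fin 4 → ℝ),
        (∀ i, 1/2 ≤ p i ∧ p i ≤ 1) →
        revenue threePath π p = 3/4 →
        ((p 0 = 1/2 ∧ p 3 = 1) ∨ (p 3 = 1/2 ∧ p 0 = 1)) := by
  have key : ∀ (π : Fin 4 ≃ Fin (Fintype.card (Fin 4))) (p : Fin 4 → ℝ),
      (∀ i, 1/2 ≤ p i ∧ p i ≤ 1) →
      revenue threePath π p ≤ 3/4 ∧
        (revenue threePath π p = 3/4 →
          ((p 0 = 1/2 ∧ p 3 = 1) ∨ (p 3 = 1/2 ∧ p 0 = 1))) := by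
    intro π p hp
    obtain ⟨h0, h0'⟩ := hp 0; obtain ⟨h1, h1'⟩ := hp 1
    obtain ⟨h2, h2'⟩ := hp 2; obtain ⟨h3, h3'⟩ := hp 3
    rw [rev_eq]
    have b1 : (if π 0 < π 1 then p 1 * (1 - p 1) * p 0 else p 0 * (1 - p 0) * p 1) ≤ 1/4 := by
      split_ifs
      · exact edgeA h0 h0' h1 h1'
      · exact edgeA h1 h1' h0 h0'
    have b2 : (if π 1 < π 2 then p 2 * (1 - p 2) * p 1 else p 1 * (1 - p 1) * p 2) ≤ 1/4 := by
      split_ifs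
      · exact edgeA h1 h1' h2 h2'
      · exact edgeA h2 h2' h1 h1'
    have b3 : (if π 2 < π 3 then p 3 * (1 - p 3) * p 2 else p 2 * (1 - p 2) * p 3) ≤ 1/4 := by
      split_ifs
      · exact edgeA h2 h2' h3 h3'
      · exact edgeA h3 h3' h2 h2'
    refine ⟨by linarith, fun heq => ?_⟩
    have e1 : (if π 0 < π 1 then p 1 * (1 - p 1) * p 0 else p 0 * (1 - p 0) * p 1) = 1/4 := by
      linarith
    have e2 : (if π 1 < π 2 then p 2 * (1 - p 2) * p 1 else p 1 * (1 - p 1) * p 2) = 1/4 := by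
      linarith
    have e3 : (if π 2 < π 3 then p 3 * (1 - p 3) * p 2 else p 2 * (1 - p 2) * p 3) = 1/4 := by
      linarith
    have E1 : (p 1 = 1/2 ∧ p 0 = 1) ∨ (p 0 = 1/2 ∧ p 1 = 1) := by
      split_ifs at e1
      · exact Or.inl (edgeB h0 h0' h1 h1' e1)
      · exact Or.inr (edgeB h1 h1' h0 h0' e1)
    have E2 : (p 2 = 1/2 ∧ p 1 = 1) ∨ (p 1 = 1/2 ∧ p 2 = 1) := by
      split_ifs at e2
      · exact Or.inl (edgeB h1 h1' h2 h2' e2)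
      · exact Or.inr (edgeB h2 h2' h1 h1' e2)
    have E3 : (p 3 = 1/2 ∧ p 2 = 1) ∨ (p 2 = 1/2 ∧ p 3 = 1) := by
      split_ifs at e3
      · exact Or.inl (edgeB h2 h2' h3 h3' e3)
      · exact Or.inr (edgeB h3 h3' h2 h2' e3)
    rcases E1 with ⟨q1, q2⟩ | ⟨q1, q2⟩ <;> rcases E2 with ⟨q3, q4⟩ | ⟨q3, q4⟩ <;>
      rcases E3 with ⟨q5, q6⟩ | ⟨q5, q6⟩ <;>
      first
        | (exfalso; linarith)
        | (left; exact ⟨by linarith, by linarith⟩)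
        | (right; exact ⟨by linarith, by linarith⟩)
  refine ⟨⟨⟨⟨![1, 0, 3, 2], ![1, 0, 3, 2], by unfold Function.LeftInverse; decide,
      by unfold Function.RightInverse Function.LeftInverse; decide⟩, ![1/2, 1, 1/2, 1],
      by intro i; fin_cases i <;> norm_num, ?_⟩, ?_⟩, fun π p hp heq => (key π p hp).2 heq⟩
  · rw [rev_eq]
    rw [if_neg (by decide), if_pos (by decide), if_neg (by decide)]
    norm_num [Equiv.coe_fn_mk, show (![1/2, 1, 1/2, 1] : Fin 4 → ℝ) 2 = 1/2 from rfl,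
      show (![1/2, 1, 1/2, 1] : Fin 4 → ℝ) 3 = 1 from rfl, show ((0:Fin 4) < 3) from by decide,
      show ¬((3:Fin 4) < 2) from by decide]
  · rintro r ⟨π, p, hp, rfl⟩
    exact (key π p hp).1
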